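/- Let X ⊂ ℙ² be given parametrically near a point by t ↦ (1 : a(t) : b(t)) with a, b holomorphic (or formal power series), b'(0) = 0, a'(0) ≠ 0, and b''(0) ≠ 0. Then the curve t ↦ v(t) = (b'(t) : (2 a(t) b'(t) − a'(t) b(t))/2 : b(t) b'(t) : a'(t)/2) in ℙ³ is an immersion at t = 0, i.e., v(0) and v'(0) (as vectors in ℂ⁴) are linearly independent. -/

import Mathlib

open PowerSeries

/-- If `t ↦ (1 : a(t) : b(t))` parametrizes a plane curve with
`b'(0) = 0`, `a'(0) ≠ 0`, `b''(0) ≠ 0`, then the curve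
`t ↦ (b' : (2ab' − a'b)/2 : bb' : a'/2)` in `ℙ³` is an immersion at `t = 0`:
the vectors `v(0)` and `v'(0)` in `ℂ⁴` are linearly independent.
(Formalized with `a, b` formal power series and the formal derivative.) -/
theorem stmt_16 (a b : PowerSeries ℂ)
    (hb' : constantCoeff (derivative ℂ b) = 0)
    (ha' : constantCoeff (derivative ℂ a) ≠ 0)
    (hb'' : constantCoeff (derivative ℂ (derivative ℂ b)) ≠ 0)
    (v : Fin 4 → PowerSeries ℂ)
    (hv : v = ![derivative ℂ b,
      (PowerSeries.C (R := ℂ) 2⁻¹) * (2 * a * derivative ℂ b - derivative ℂ a * b),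
      b * derivative ℂ b,
      (PowerSeries.C (R := ℂ) 2⁻¹) * derivative ℂ a]) :
    LinearIndependent ℂ
      ![fun j => constantCoeff (v j),
        fun j => constantCoeff (derivative ℂ (v j))] := by
  subst hv
  rw [LinearIndependent.pair_iff]
  intro s t hst
  have h0 := congrFun hst 0
  have h3 := congrFun hst 3
  simp [hb', derivative_C, Derivation.leibniz, smul_eq_mul] at h0 h3
  have ht : t = 0 := h0.resolve_right hb''
  subst ht
  simp at h3
  exact ⟨h3.resolve_right ha', rfl⟩
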